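/- Let |a⟩,|a'⟩ be an orthonormal basis of ℂ² with ⟨0|a⟩ ≠ 0 and ⟨1|a⟩ ≠ 0. If A is a 2×2 complex matrix such that the eight states A|0⟩⊗|0,0⟩, A|a⟩⊗|1,0⟩, A|a'⟩⊗|1,0⟩, A|0⟩⊗|b,1⟩, A|0⟩⊗|b',1⟩, A|1⟩⊗|0,c⟩, A|1⟩⊗|0,c'⟩, A|1⟩⊗|1,1⟩ are pairwise orthogonal (where {|b⟩,|b'⟩} and {|c⟩,|c'⟩} are orthonormal bases of ℂ² neither containing |0⟩ or |1⟩), then A†A is a scalar multiple of the identity. -/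

import Mathlib

open scoped ComplexInnerProductSpace Matrix
noncomputable section
/-- A qubit state space `ℂ²`. -/
abbrev Qubit := EuclideanSpace ℂ (Fin 2)
/-- The standard basis vector `|0⟩`. -/
def e0 : Qubit := EuclideanSpace.single 0 1
/-- The standard basis vector `|1⟩`. -/
def e1 : Qubit := EuclideanSpace.single 1 1
/-- `OB a a'` means `{a, a'}` is an orthonormal basis of `ℂ²`. -/
def OB (a a' : Qubit) : Prop := ⟪a, a⟫ = 1 ∧ ⟪a', a'⟫ = 1 ∧ ⟪a, a'⟫ = 0
/-- The two-qubit product state `a ⊗ b`. -/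
def prod2 (a b : Qubit) : EuclideanSpace ℂ (Fin 2 × Fin 2) := WithLp.toLp 2 (fun p => a p.1 * b p.2)
/-- The three-qubit product state `a ⊗ b ⊗ c`. -/
def prod3 (a b c : Qubit) : EuclideanSpace ℂ (Fin 2 × Fin 2 × Fin 2) :=
  WithLp.toLp 2 (fun p => a p.1 * b p.2.1 * c p.2.2)
/-- The four-qubit product state `a ⊗ b ⊗ c ⊗ d`. -/
def prod4 (a b c d : Qubit) : EuclideanSpace ℂ (Fin 2 × Fin 2 × Fin 2 × Fin 2) :=
  WithLp.toLp 2 (fun p => a p.1 * b p.2.1 * c p.2.2.1 * d p.2.2.2)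
/-- Apply a `2 × 2` matrix to a qubit state. -/
def appM (A : Matrix (Fin 2) (Fin 2) ℂ) (v : Qubit) : Qubit := WithLp.toLp 2 (fun i => ∑ j, A i j * v j)

lemma inner_prod3 (u v w u' v' w' : Qubit) :
    ⟪prod3 u v w, prod3 u' v' w'⟫ = ⟪u,u'⟫ * ⟪v,v'⟫ * ⟪w,w'⟫ := by
  simp [prod3, PiLp.inner_apply, RCLike.inner_apply, Fintype.sum_prod_type,
    Fin.sum_univ_two, map_mul]
  ring

lemma inner_appM (A : Matrix (Fin 2) (Fin 2) ℂ) (u v : Qubit) :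
    ⟪appM A u, appM A v⟫ = ∑ i, ∑ j, (starRingEnd ℂ) (u i) * (Aᴴ * A) i j * v j := by
  simp [appM, PiLp.inner_apply, RCLike.inner_apply, Fin.sum_univ_two, map_add, map_mul,
    Matrix.mul_apply, Matrix.conjTranspose_apply]
  ring


/-- If `{a,a'}` is an orthonormal basis of `ℂ²` with `⟨0|a⟩ ≠ 0 ≠ ⟨1|a⟩`,
`{b,b'}` and `{c,c'}` are orthonormal bases neither containing `|0⟩` or `|1⟩`, and the
eight states `A|0⟩⊗|0,0⟩, A|a⟩⊗|1,0⟩, A|a'⟩⊗|1,0⟩, A|0⟩⊗|b,1⟩, A|0⟩⊗|b',1⟩,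
A|1⟩⊗|0,c⟩, A|1⟩⊗|0,c'⟩, A|1⟩⊗|1,1⟩` are pairwise orthogonal, then `A†A` is a scalar
multiple of the identity. -/
theorem orthogonality_forces_scalar_POVM
    (A : Matrix (Fin 2) (Fin 2) ℂ) (a a' b b' c c' : Qubit)
    (ha : OB a a') (hb : OB b b') (hc : OB c c')
    (ha0 : ⟪e0, a⟫ ≠ 0) (ha1 : ⟪e1, a⟫ ≠ 0)
    (hbne : ∀ v ∈ ({b, b'} : Set Qubit), ⟪e0, v⟫ ≠ 0 ∧ ⟪e1, v⟫ ≠ 0)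
    (hcne : ∀ v ∈ ({c, c'} : Set Qubit), ⟪e0, v⟫ ≠ 0 ∧ ⟪e1, v⟫ ≠ 0)
    (horth : ∀ j k : Fin 8, j ≠ k →
      ⟪![prod3 (appM A e0) e0 e0, prod3 (appM A a) e1 e0, prod3 (appM A a') e1 e0,
          prod3 (appM A e0) b e1, prod3 (appM A e0) b' e1, prod3 (appM A e1) e0 c,
          prod3 (appM A e1) e0 c', prod3 (appM A e1) e1 e1] j,
        ![prod3 (appM A e0) e0 e0, prod3 (appM A a) e1 e0, prod3 (appM A a') e1 e0,
          prod3 (appM A e0) b e1, prod3 (appM A e0) b' e1, prod3 (appM A e1) e0 c,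
          prod3 (appM A e1) e0 c', prod3 (appM A e1) e1 e1] k⟫ = 0) :
    ∃ κ : ℂ, Aᴴ * A = κ • (1 : Matrix (Fin 2) (Fin 2) ℂ) := by
  set M := Aᴴ * A with hMdef
  have hc0 : ⟪e0, c⟫ ≠ 0 := (hcne c (Or.inl rfl)).1
  -- pair (0,5): M 0 1 = 0
  have h05 := horth 0 5 (by decide)
  rw [show (![prod3 (appM A e0) e0 e0, prod3 (appM A a) e1 e0, prod3 (appM A a') e1 e0,
          prod3 (appM A e0) b e1, prod3 (appM A e0) b' e1, prod3 (appM A e1) e0 c,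
          prod3 (appM A e1) e0 c', prod3 (appM A e1) e1 e1] (0:Fin 8)) = prod3 (appM A e0) e0 e0 from rfl,
      show (![prod3 (appM A e0) e0 e0, prod3 (appM A a) e1 e0, prod3 (appM A a') e1 e0,
          prod3 (appM A e0) b e1, prod3 (appM A e0) b' e1, prod3 (appM A e1) e0 c,
          prod3 (appM A e1) e0 c', prod3 (appM A e1) e1 e1] (5:Fin 8)) = prod3 (appM A e1) e0 c from rfl,
      inner_prod3, inner_appM] at h05
  simp only [Fin.sum_univ_two] at h05
  simp only [e0, e1, PiLp.inner_apply, RCLike.inner_apply, Fin.sum_univ_two,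
    EuclideanSpace.single_apply] at h05 hc0 ha0 ha1 ⊢
  norm_num at h05 hc0 ha0 ha1
  have hM01 : M 0 1 = 0 := by
    rcases h05 with h | h
    · exact h
    · exact absurd h hc0
  have hMH : Mᴴ = M := by
    rw [hMdef, Matrix.conjTranspose_mul, Matrix.conjTranspose_conjTranspose]
  have hM10 : M 1 0 = 0 := by
    have := congrFun (congrFun hMH 1) 0
    rw [Matrix.conjTranspose_apply, hM01] at this
    simpa using this.symm
  -- pair (1,2)
  have h12 := horth 1 2 (by decide)
  rw [show (![prod3 (appM A e0) e0 e0, prod3 (appM A a) e1 e0, prod3 (appM A a') e1 e0,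
          prod3 (appM A e0) b e1, prod3 (appM A e0) b' e1, prod3 (appM A e1) e0 c,
          prod3 (appM A e1) e0 c', prod3 (appM A e1) e1 e1] (1:Fin 8)) = prod3 (appM A a) e1 e0 from rfl,
      show (![prod3 (appM A e0) e0 e0, prod3 (appM A a) e1 e0, prod3 (appM A a') e1 e0,
          prod3 (appM A e0) b e1, prod3 (appM A e0) b' e1, prod3 (appM A e1) e0 c,
          prod3 (appM A e1) e0 c', prod3 (appM A e1) e1 e1] (2:Fin 8)) = prod3 (appM A a') e1 e0 from rfl,
      inner_prod3, inner_appM] at h12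
  simp only [Fin.sum_univ_two] at h12
  simp only [e0, e1, PiLp.inner_apply, RCLike.inner_apply, Fin.sum_univ_two,
    EuclideanSpace.single_apply] at h12
  rw [← hMdef, hM01, hM10] at h12
  simp only [mul_zero, zero_mul, add_zero, zero_add] at h12
  norm_num at h12
  -- orthonormality facts
  obtain ⟨haa, ha'a', haa'⟩ := ha
  simp only [PiLp.inner_apply, RCLike.inner_apply, Fin.sum_univ_two] at haa ha'a' haa'
  have ha'0 : a' 0 ≠ 0 := by
    intro h0
    have h1 : a' 1 = 0 := by
      rw [h0] at haa'
      simp at haa'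
      rcases haa' with h | h
      · exact h
      · exact absurd h ha1
    rw [h0, h1] at ha'a'
    simp at ha'a'
  -- deduce M 0 0 = M 1 1
  have key : M 0 0 = M 1 1 := by
    have hp : (starRingEnd ℂ) (a 0) * a' 0 ≠ 0 :=
      mul_ne_zero (by simpa using ha0) ha'0
    have h2 : (starRingEnd ℂ) (a 0) * a' 0 * (M 0 0 - M 1 1) = 0 := by
      have : (starRingEnd ℂ) (a 1) * a' 1 = -((starRingEnd ℂ) (a 0) * a' 0) := by
        linear_combination haa'
      linear_combination h12 - M 1 1 * haa'
    have := mul_eq_zero.mp h2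
    rcases this with h | h
    · exact absurd h hp
    · exact sub_eq_zero.mp h
  refine ⟨M 0 0, ?_⟩
  ext i j
  fin_cases i <;> fin_cases j <;>
    simp [Matrix.one_apply, hM01, hM10, key.symm]
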